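/- Suppose v̂ ∈ ℝᵐ is a centered point for parameter μ > 0 and v ≠ v̂. Let d = d(v,μ) ≠ 0 be the Newton direction at v, define f(t) := h(v̂, v + t·d), and fix β ∈ (0,1). If max(1, ‖d‖∞²/(2β)) = 1, then f(1) ≤ (1/2)‖d‖∞²·f(0) ≤ β·f(0). -/

import Mathlib

open Matrix

/-- Elementwise exponentiation `e^v` of a vector. -/
noncomputable def expV {m : ℕ} (v : Fin m → ℝ) : Fin m → ℝ := fun i => Real.exp (v i)

/-- The log-domain Newton system: `(d, x)` satisfies
`√μ·Aᵀ(eᵛ + eᵛ∘d) = Wx + c` and `√μ·(e^{−v} − e^{−v}∘d) = Ax + b`. -/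
noncomputable def IsNewton {m n : ℕ} (A : Matrix (Fin m) (Fin n) ℝ) (b : Fin m → ℝ)
    (c : Fin n → ℝ) (W : Matrix (Fin n) (Fin n) ℝ) (μ : ℝ) (v d : Fin m → ℝ)
    (x : Fin n → ℝ) : Prop :=
  Real.sqrt μ • (Aᵀ).mulVec (expV v + expV v * d) = W.mulVec x + c ∧
  Real.sqrt μ • (expV (-v) - expV (-v) * d) = A.mulVec x + b

/-- `v` is a centered point for parameter `μ`, witnessed by `x`:
`√μ·Aᵀeᵛ = Wx + c` and `√μ·e^{−v} = Ax + b`. -/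
noncomputable def IsCentered {m n : ℕ} (A : Matrix (Fin m) (Fin n) ℝ) (b : Fin m → ℝ)
    (c : Fin n → ℝ) (W : Matrix (Fin n) (Fin n) ℝ) (μ : ℝ) (v : Fin m → ℝ)
    (x : Fin n → ℝ) : Prop :=
  Real.sqrt μ • (Aᵀ).mulVec (expV v) = W.mulVec x + c ∧
  Real.sqrt μ • expV (-v) = A.mulVec x + b

/-- The divergence `h(u,v) := ⟨eᵘ, e^{−v}⟩ + ⟨e^{−u}, eᵛ⟩ − 2m`. -/
noncomputable def diverg {m : ℕ} (u v : Fin m → ℝ) : ℝ :=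
  (∑ i, Real.exp (u i) * Real.exp (-v i)) + (∑ i, Real.exp (-u i) * Real.exp (v i))
    - 2 * m

/-- The Euclidean norm of a vector in `ℝᵐ`. -/
noncomputable def enorm {m : ℕ} (d : Fin m → ℝ) : ℝ := Real.sqrt (∑ i, d i ^ 2)

section Helpers

private lemma mono_aux7 {g g' : ℝ → ℝ} (hder : ∀ x, HasDerivAt g (g' x) x)
    (hp : ∀ x, 0 ≤ x → 0 ≤ g' x) : ∀ t, 0 ≤ t → g 0 ≤ g t := by
  intro t ht
  have hdiff : Differentiable ℝ g := fun x => (hder x).differentiableAt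
  have hmono : MonotoneOn g (Set.Ici (0:ℝ)) := by
    apply monotoneOn_of_deriv_nonneg (convex_Ici 0) hdiff.continuous.continuousOn
      hdiff.differentiableOn
    intro x hx
    rw [interior_Ici] at hx
    rw [(hder x).deriv]
    exact hp x (le_of_lt hx)
  exact hmono (Set.self_mem_Ici) ht ht

private lemma expneg_deriv7 (t : ℝ) :
    HasDerivAt (fun x : ℝ => Real.exp (-x)) (-Real.exp (-t)) t := by
  simpa using ((hasDerivAt_id t).neg).exp

private lemma c2_7 (t : ℝ) (ht : 0 ≤ t) : Real.exp (-t) ≤ 1 - t + t^2/2 := by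
  have h := mono_aux7 (g := fun x => 1 - x + x^2/2 - Real.exp (-x))
      (g' := fun x => -1 + x + Real.exp (-x)) ?_ ?_ t ht
  · simpa using h
  · intro x
    have : HasDerivAt (fun x : ℝ => 1 - x + x^2/2 - Real.exp (-x))
        (0 - 1 + (↑2 * x ^ 1)/2 - -Real.exp (-x)) x :=
      ((((hasDerivAt_const x (1:ℝ)).sub (hasDerivAt_id x)).add
        ((hasDerivAt_pow 2 x).div_const 2)).sub (expneg_deriv7 x))
    convert this using 1
    push_cast
    ring
  · intro x hx
    have := Real.add_one_le_exp (-x)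
    linarith

private lemma c3_7 (t : ℝ) (ht : 0 ≤ t) : 1 - t + t^2/2 - t^3/6 ≤ Real.exp (-t) := by
  have h := mono_aux7 (g := fun x => Real.exp (-x) - (1 - x + x^2/2 - x^3/6))
      (g' := fun x => -Real.exp (-x) - (-1 + x - x^2/2)) ?_ ?_ t ht
  · simp at h; linarith
  · intro x
    have : HasDerivAt (fun x : ℝ => Real.exp (-x) - (1 - x + x^2/2 - x^3/6))
        (-Real.exp (-x) - (0 - 1 + (↑2 * x ^ 1)/2 - (↑3 * x ^ 2)/6)) x :=
      (expneg_deriv7 x).sub ((((hasDerivAt_const x (1:ℝ)).sub (hasDerivAt_id x)).add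
        ((hasDerivAt_pow 2 x).div_const 2)).sub ((hasDerivAt_pow 3 x).div_const 6))
    convert this using 1
    push_cast
    ring
  · intro x hx
    have := c2_7 x hx
    linarith

private lemma c4_7 (t : ℝ) (ht : 0 ≤ t) :
    Real.exp (-t) ≤ 1 - t + t^2/2 - t^3/6 + t^4/24 := by
  have h := mono_aux7 (g := fun x => 1 - x + x^2/2 - x^3/6 + x^4/24 - Real.exp (-x))
      (g' := fun x => -1 + x - x^2/2 + x^3/6 + Real.exp (-x)) ?_ ?_ t ht
  · simp at h; linarith
  · intro x
    have : HasDerivAt (fun x : ℝ => 1 - x + x^2/2 - x^3/6 + x^4/24 - Real.exp (-x))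
        (0 - 1 + (↑2 * x ^ 1)/2 - (↑3 * x ^ 2)/6 + (↑4 * x ^ 3)/24 - -Real.exp (-x)) x :=
      (((((hasDerivAt_const x (1:ℝ)).sub (hasDerivAt_id x)).add
        ((hasDerivAt_pow 2 x).div_const 2)).sub ((hasDerivAt_pow 3 x).div_const 6)).add
        ((hasDerivAt_pow 4 x).div_const 24)).sub (expneg_deriv7 x)
    convert this using 1
    push_cast
    ring
  · intro x hx
    have := c3_7 x hx
    linarith

private lemma c5_7 (t : ℝ) (ht : 0 ≤ t) :
    1 - t + t^2/2 - t^3/6 + t^4/24 - t^5/120 ≤ Real.exp (-t) := by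
  have h := mono_aux7
      (g := fun x => Real.exp (-x) - (1 - x + x^2/2 - x^3/6 + x^4/24 - x^5/120))
      (g' := fun x => -Real.exp (-x) - (-1 + x - x^2/2 + x^3/6 - x^4/24)) ?_ ?_ t ht
  · simp at h; linarith
  · intro x
    have : HasDerivAt
        (fun x : ℝ => Real.exp (-x) - (1 - x + x^2/2 - x^3/6 + x^4/24 - x^5/120))
        (-Real.exp (-x) -
          (0 - 1 + (↑2 * x ^ 1)/2 - (↑3 * x ^ 2)/6 + (↑4 * x ^ 3)/24 - (↑5 * x ^ 4)/120)) x :=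
      (expneg_deriv7 x).sub ((((((hasDerivAt_const x (1:ℝ)).sub (hasDerivAt_id x)).add
        ((hasDerivAt_pow 2 x).div_const 2)).sub ((hasDerivAt_pow 3 x).div_const 6)).add
        ((hasDerivAt_pow 4 x).div_const 24)).sub ((hasDerivAt_pow 5 x).div_const 120))
    convert this using 1
    push_cast
    ring
  · intro x hx
    have := c4_7 x hx
    linarith

/-- `E(x) = e^x - 1 - x - x²/3 - (x²/6)e^x ≤ 0` for `x² ≤ 2`. -/
private lemma E_nonpos7 (x : ℝ) (hx : x^2 ≤ 2) :
    Real.exp x ≤ 1 + x + x^2/3 + x^2/6 * Real.exp x := by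
  rcases le_or_gt 0 x with h0 | h0
  · have hx32 : x ≤ 3/2 := by nlinarith
    have hq := c5_7 x h0
    have huw : Real.exp x * Real.exp (-x) = 1 := by
      rw [← Real.exp_add]; simp
    have hu : 0 < Real.exp x := Real.exp_pos x
    have hfac : (0:ℝ) ≤ 6 + 6*x + 2*x^2 := by nlinarith
    have hA : 6 - x^2 ≤ (6 + 6*x + 2*x^2) * Real.exp (-x) := by
      have hpoly : 6 - x^2 ≤
          (6 + 6*x + 2*x^2) * (1 - x + x^2/2 - x^3/6 + x^4/24 - x^5/120) := by
        have hcub : (0:ℝ) ≤ 15 - 8*x + 2*x^2 - x^3 := by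
          nlinarith [mul_le_mul_of_nonneg_left hx32 (sq_nonneg x)]
        nlinarith [mul_nonneg (pow_nonneg h0 4) hcub]
      nlinarith [mul_le_mul_of_nonneg_left hq hfac]
    have := mul_le_mul_of_nonneg_left hA hu.le
    nlinarith [this, huw]
  · have h0t : 0 ≤ -x := by linarith
    have hr := c4_7 (-x) h0t
    have hfac : (0:ℝ) ≤ 6 - (-x)^2 := by nlinarith
    have : Real.exp x * (6 - (-x)^2) ≤
        (1 - (-x) + (-x)^2/2 - (-x)^3/6 + (-x)^4/24) * (6 - (-x)^2) := by
      have hxx : Real.exp x = Real.exp (-(-x)) := by ring_nf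
      rw [hxx]
      exact mul_le_mul_of_nonneg_right hr hfac
    nlinarith [this, sq_nonneg x, pow_nonneg h0t 4, sq_nonneg (x+1)]

/-- Per-component inequality: second order Taylor-type bound on `cosh`. -/
private lemma comp_ineq7 (a t : ℝ) (ht : t^2 ≤ 2) :
    Real.exp (a + t) + Real.exp (-(a + t)) ≤
      Real.exp a + Real.exp (-a) + t * (Real.exp a - Real.exp (-a)) +
        t^2/6 * (2 * (Real.exp a + Real.exp (-a)) +
          (Real.exp (a + t) + Real.exp (-(a + t)))) := by
  have e1 : Real.exp (a + t) = Real.exp a * Real.exp t := Real.exp_add a t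
  have e2 : Real.exp (-(a + t)) = Real.exp (-a) * Real.exp (-t) := by
    rw [← Real.exp_add]; ring_nf
  have hEt := E_nonpos7 t ht
  have hEnt := E_nonpos7 (-t) (by nlinarith)
  have h1 : 0 ≤ Real.exp a * (1 + t + t^2/3 + t^2/6 * Real.exp t - Real.exp t) :=
    mul_nonneg (Real.exp_pos a).le (by linarith)
  have h2 : 0 ≤ Real.exp (-a) *
      (1 + (-t) + (-t)^2/3 + (-t)^2/6 * Real.exp (-t) - Real.exp (-t)) :=
    mul_nonneg (Real.exp_pos (-a)).le (by linarith)
  rw [e1, e2]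
  nlinarith [h1, h2]

private lemma two_le_exp_add7 (x : ℝ) : 2 ≤ Real.exp x + Real.exp (-x) := by
  have h : Real.exp x * Real.exp (-x) = 1 := by rw [← Real.exp_add]; simp
  have h2 : Real.exp x * (Real.exp x * Real.exp (-x)) = Real.exp x := by rw [h]; ring
  nlinarith [mul_nonneg (sq_nonneg (Real.exp x - 1)) (Real.exp_pos (-x)).le, h, h2]

end Helpers

/-- if `v̂` is centered for `μ > 0`, `v ≠ v̂`, `d = d(v,μ) ≠ 0`,
`β ∈ (0,1)` and `max(1, ‖d‖∞²/(2β)) = 1`, then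
`f(1) ≤ (1/2)‖d‖∞²·f(0) ≤ β·f(0)` where `f(t) := h(v̂, v + t·d)`
(here `‖d‖` on `Fin m → ℝ` is the sup norm). -/
theorem stmt_7 {m n : ℕ} (A : Matrix (Fin m) (Fin n) ℝ) (b : Fin m → ℝ) (c : Fin n → ℝ)
    (W : Matrix (Fin n) (Fin n) ℝ) (hW : W.PosSemidef) (hAW : (Aᵀ * A + W).PosDef)
    (μ : ℝ) (hμ : 0 < μ) (vhat : Fin m → ℝ) (xhat : Fin n → ℝ)
    (hcent : IsCentered A b c W μ vhat xhat)
    (v d : Fin m → ℝ) (x : Fin n → ℝ) (hd : IsNewton A b c W μ v d x)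
    (hne : v ≠ vhat) (hdne : d ≠ 0)
    (β : ℝ) (hβ : β ∈ Set.Ioo (0 : ℝ) 1)
    (hα : max 1 (‖d‖ ^ 2 / (2 * β)) = 1) :
    diverg vhat (v + d) ≤ (1 / 2) * ‖d‖ ^ 2 * diverg vhat v ∧
    (1 / 2) * ‖d‖ ^ 2 * diverg vhat v ≤ β * diverg vhat v := by
  obtain ⟨hd1, hd2⟩ := hd
  obtain ⟨hc1, hc2⟩ := hcent
  obtain ⟨hβ0, hβ1⟩ := hβ
  have hk0 : (0:ℝ) ≤ ‖d‖^2 := sq_nonneg _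
  have hmax : ‖d‖ ^ 2 / (2 * β) ≤ 1 := max_eq_left_iff.mp hα
  have hk2β : ‖d‖^2 ≤ 2*β := by
    rw [div_le_one (by linarith : (0:ℝ) < 2*β)] at hmax
    exact hmax
  have hk2 : ‖d‖^2 ≤ 2 := by linarith
  have hdk : ∀ i, (d i)^2 ≤ ‖d‖^2 := by
    intro i
    have h := norm_le_pi_norm d i
    rw [Real.norm_eq_abs] at h
    calc (d i)^2 = |d i|^2 := (sq_abs _).symm
      _ ≤ ‖d‖^2 := pow_le_pow_left₀ (abs_nonneg _) h 2
  -- orthogonality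
  have key : 0 ≤ ∑ i, ((2:ℝ) - (d i)^2 - ((1 + d i) * Real.exp (v i - vhat i)
      + (1 - d i) * Real.exp (-(v i - vhat i)))) := by
    set y : Fin n → ℝ := x - xhat with hy
    set P : Fin m → ℝ := expV v + expV v * d - expV vhat with hPdef
    set Q : Fin m → ℝ := (expV (-v) - expV (-v) * d) - expV (-vhat) with hQdef
    have hP : Real.sqrt μ • ((Aᵀ).mulVec P) = W.mulVec y := by
      rw [hPdef, hy, Matrix.mulVec_sub, smul_sub, hd1, hc1, Matrix.mulVec_sub]
      abel
    have hQ : Real.sqrt μ • Q = A.mulVec y := by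
      rw [hQdef, hy, smul_sub, hd2, hc2, Matrix.mulVec_sub]
      abel
    have hpsd : 0 ≤ y ⬝ᵥ W.mulVec y := by simpa using hW.dotProduct_mulVec_nonneg y
    have h1 : Real.sqrt μ * (Real.sqrt μ * (P ⬝ᵥ Q)) = y ⬝ᵥ W.mulVec y := by
      calc Real.sqrt μ * (Real.sqrt μ * (P ⬝ᵥ Q))
          = Real.sqrt μ * (P ⬝ᵥ (Real.sqrt μ • Q)) := by
            rw [dotProduct_smul, smul_eq_mul]
        _ = Real.sqrt μ * (P ⬝ᵥ A.mulVec y) := by rw [hQ]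
        _ = Real.sqrt μ * ((Aᵀ.mulVec P) ⬝ᵥ y) := by
            rw [Matrix.dotProduct_mulVec, ← Matrix.mulVec_transpose]
        _ = (Real.sqrt μ • (Aᵀ.mulVec P)) ⬝ᵥ y := by
            rw [smul_dotProduct, smul_eq_mul]
        _ = (W.mulVec y) ⬝ᵥ y := by rw [hP]
        _ = y ⬝ᵥ W.mulVec y := dotProduct_comm _ _
    have hμPQ : 0 ≤ μ * (P ⬝ᵥ Q) := by
      rw [← Real.mul_self_sqrt hμ.le, mul_assoc, h1]
      exact hpsd
    have horth : 0 ≤ P ⬝ᵥ Q := by nlinarith [hμPQ, hμ]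
    have hexp : P ⬝ᵥ Q = ∑ i, ((2:ℝ) - (d i)^2 - ((1 + d i) * Real.exp (v i - vhat i)
        + (1 - d i) * Real.exp (-(v i - vhat i)))) := by
      simp only [dotProduct]
      apply Finset.sum_congr rfl
      intro i _
      simp only [hPdef, hQdef, Pi.add_apply, Pi.sub_apply, Pi.mul_apply, Pi.neg_apply, expV]
      have e1 : Real.exp (v i) * Real.exp (-v i) = 1 := by rw [← Real.exp_add]; simp
      have e2 : Real.exp (v i) * Real.exp (-vhat i) = Real.exp (v i - vhat i) := by
        rw [← Real.exp_add]; ring_nf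
      have e3 : Real.exp (vhat i) * Real.exp (-v i) = Real.exp (-(v i - vhat i)) := by
        rw [← Real.exp_add]; ring_nf
      have e4 : Real.exp (vhat i) * Real.exp (-vhat i) = 1 := by rw [← Real.exp_add]; simp
      linear_combination (1 - (d i)^2) * e1 - (1 + d i) * e2 - (1 - d i) * e3 + e4
    rw [← hexp]; exact horth
  -- rewrite the divergences
  have hdivv : diverg vhat v
      = (∑ i, (Real.exp (v i - vhat i) + Real.exp (-(v i - vhat i)))) - 2 * m := by
    unfold diverg
    congr 1
    rw [← Finset.sum_add_distrib]
    apply Finset.sum_congr rfl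
    intro i _
    rw [← Real.exp_add, ← Real.exp_add]
    ring_nf
  have hdivvd : diverg vhat (v + d)
      = (∑ i, (Real.exp ((v i - vhat i) + d i) + Real.exp (-((v i - vhat i) + d i))))
        - 2 * m := by
    unfold diverg
    congr 1
    rw [← Finset.sum_add_distrib]
    apply Finset.sum_congr rfl
    intro i _
    simp only [Pi.add_apply]
    rw [← Real.exp_add, ← Real.exp_add]
    ring_nf
  -- key rearranged
  have key' : (∑ i, (Real.exp (v i - vhat i) + Real.exp (-(v i - vhat i))))
      + (∑ i, d i * (Real.exp (v i - vhat i) - Real.exp (-(v i - vhat i))))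
      + (∑ i, (d i)^2) ≤ 2 * m := by
    have h1 : ∑ i, ((2:ℝ) - (d i)^2 - ((1 + d i) * Real.exp (v i - vhat i)
        + (1 - d i) * Real.exp (-(v i - vhat i))))
        = ∑ i, ((2:ℝ) - ((Real.exp (v i - vhat i) + Real.exp (-(v i - vhat i)))
          + d i * (Real.exp (v i - vhat i) - Real.exp (-(v i - vhat i))) + (d i)^2)) :=
      Finset.sum_congr rfl (fun i _ => by ring)
    rw [h1] at key
    simp only [Finset.sum_sub_distrib, Finset.sum_add_distrib, Finset.sum_const,
      Finset.card_univ, Fintype.card_fin, nsmul_eq_mul] at key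
    have hsplitA : ∑ i, (Real.exp (v i - vhat i) + Real.exp (-(v i - vhat i)))
        = (∑ i, Real.exp (v i - vhat i)) + (∑ i, Real.exp (-(v i - vhat i))) :=
      Finset.sum_add_distrib
    linarith [key, hsplitA]
  -- summed per-component inequality
  have hcomp : ∀ i : Fin m,
      Real.exp ((v i - vhat i) + d i) + Real.exp (-((v i - vhat i) + d i)) ≤
        (1 + ‖d‖^2/3) * (Real.exp (v i - vhat i) + Real.exp (-(v i - vhat i)))
        + (d i * (Real.exp (v i - vhat i) - Real.exp (-(v i - vhat i))) + (d i)^2)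
        + ‖d‖^2/6 * (Real.exp ((v i - vhat i) + d i) + Real.exp (-((v i - vhat i) + d i)))
        - ‖d‖^2 := by
    intro i
    have h := comp_ineq7 (v i - vhat i) (d i) (le_trans (hdk i) hk2)
    have hA2 : 2 ≤ Real.exp (v i - vhat i) + Real.exp (-(v i - vhat i)) :=
      two_le_exp_add7 _
    have hB2 : 2 ≤ Real.exp ((v i - vhat i) + d i) + Real.exp (-((v i - vhat i) + d i)) :=
      two_le_exp_add7 _
    have hm : (d i)^2 * (2 * ((Real.exp (v i - vhat i) + Real.exp (-(v i - vhat i))) - 2)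
        + ((Real.exp ((v i - vhat i) + d i) + Real.exp (-((v i - vhat i) + d i))) - 2))
        ≤ ‖d‖^2 * (2 * ((Real.exp (v i - vhat i) + Real.exp (-(v i - vhat i))) - 2)
        + ((Real.exp ((v i - vhat i) + d i) + Real.exp (-((v i - vhat i) + d i))) - 2)) :=
      mul_le_mul_of_nonneg_right (hdk i) (by linarith)
    nlinarith [h, hm]
  have hsum : (∑ i, (Real.exp ((v i - vhat i) + d i) + Real.exp (-((v i - vhat i) + d i))))
      ≤ (1 + ‖d‖^2/3) * (∑ i, (Real.exp (v i - vhat i) + Real.exp (-(v i - vhat i))))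
        + ((∑ i, d i * (Real.exp (v i - vhat i) - Real.exp (-(v i - vhat i))))
          + (∑ i, (d i)^2))
        + ‖d‖^2/6 * (∑ i, (Real.exp ((v i - vhat i) + d i)
            + Real.exp (-((v i - vhat i) + d i))))
        - ‖d‖^2 * m := by
    calc (∑ i, (Real.exp ((v i - vhat i) + d i) + Real.exp (-((v i - vhat i) + d i))))
        ≤ ∑ i, ((1 + ‖d‖^2/3) * (Real.exp (v i - vhat i) + Real.exp (-(v i - vhat i)))
          + (d i * (Real.exp (v i - vhat i) - Real.exp (-(v i - vhat i))) + (d i)^2)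
          + ‖d‖^2/6 * (Real.exp ((v i - vhat i) + d i)
            + Real.exp (-((v i - vhat i) + d i)))
          - ‖d‖^2) := Finset.sum_le_sum (fun i _ => hcomp i)
      _ = _ := by
          simp only [Finset.sum_add_distrib, Finset.sum_sub_distrib, ← Finset.mul_sum,
            Finset.sum_const, Finset.card_univ, Fintype.card_fin, nsmul_eq_mul]
          ring
  have hF0 : 0 ≤ (∑ i, (Real.exp (v i - vhat i) + Real.exp (-(v i - vhat i)))) - 2 * m := by
    have h2 : (∑ _i : Fin m, (2:ℝ))
        ≤ ∑ i, (Real.exp (v i - vhat i) + Real.exp (-(v i - vhat i))) :=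
      Finset.sum_le_sum (fun i _ => two_le_exp_add7 _)
    simp only [Finset.sum_const, Finset.card_univ, Fintype.card_fin, nsmul_eq_mul] at h2
    linarith
  rw [hdivv, hdivvd]
  set k := ‖d‖^2 with hkdef
  set TA := ∑ i, (Real.exp (v i - vhat i) + Real.exp (-(v i - vhat i))) with hTAdef
  set TB := ∑ i, (Real.exp ((v i - vhat i) + d i) + Real.exp (-((v i - vhat i) + d i)))
    with hTBdef
  have hmain : TB - 2 * m ≤ k/3 * (TA - 2 * m) + k/6 * (TB - 2 * m) := by
    linarith [hsum, key']
  constructor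
  · have h6k : (0:ℝ) ≤ 6 - k := by linarith
    have h2k : (0:ℝ) ≤ 2 - k := by linarith
    nlinarith [hmain, h6k, h2k, mul_nonneg (mul_nonneg hk0 hF0) h2k, hF0]
  · nlinarith [mul_le_mul_of_nonneg_right hk2β hF0]
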